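/- Let u₀ ∈ V be a fixed point of A (Au₀ = u₀). Then u₀ is differentiable on [ε,Λ] with u₀'(x) = −(λ/(4x²))·∫_ε^x [y·u₀(y)/(y + u₀(y)²)] dy for all x ∈ [ε,Λ]; in particular u₀'(ε) = 0 and u₀'(x) < 0 for all x ∈ (ε,Λ]. -/

import Mathlib

open Real Set MeasureTheory intervalIntegral

/-- The function `w(x) = (4ε/λ)·√(ε/(Λx))`. -/
noncomputable def wfun (lam ε Λ : ℝ) (x : ℝ) : ℝ :=
  (4 * ε / lam) * Real.sqrt (ε / (Λ * x))

/-- The nonlinear integral operator `A`. -/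
noncomputable def opA (lam ε Λ : ℝ) (u : ℝ → ℝ) (x : ℝ) : ℝ :=
  (lam / 2) * ∫ y in ε..Λ, (1 / (y + x + |y - x|)) * (y * u y / (y + (u y) ^ 2))

/-- Membership in the set `V`: continuous on `[ε,Λ]` and `w(x) ≤ u(x) ≤ (λ/4)√Λ` there. -/
def memV (lam ε Λ : ℝ) (u : ℝ → ℝ) : Prop :=
  ContinuousOn u (Set.Icc ε Λ) ∧
    ∀ x ∈ Set.Icc ε Λ, wfun lam ε Λ x ≤ u x ∧ u x ≤ (lam / 4) * Real.sqrt Λ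

theorem stmt_10 (ε Λ lam : ℝ) (hε : 0 < ε) (hεΛ : ε < Λ) (hlam : 2 < lam)
    (hratio : ε / Λ ≤ min (1 / 16)
      (((Real.sqrt (lam ^ 2 + 128 * (lam - 2)) - lam) / 64) ^ 2))
    (u₀ : ℝ → ℝ) (hu₀ : memV lam ε Λ u₀)
    (hfix : ∀ x ∈ Set.Icc ε Λ, u₀ x = opA lam ε Λ u₀ x) :
    ∃ u₀' : ℝ → ℝ,
      (∀ x ∈ Set.Icc ε Λ, HasDerivWithinAt u₀ (u₀' x) (Set.Icc ε Λ) x) ∧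
      (∀ x ∈ Set.Icc ε Λ,
        u₀' x = -(lam / (4 * x ^ 2)) * ∫ y in ε..x, y * u₀ y / (y + (u₀ y) ^ 2)) ∧
      u₀' ε = 0 ∧
      ∀ x ∈ Set.Ioc ε Λ, u₀' x < 0 := by
  obtain ⟨hcont, hbound⟩ := hu₀
  have hlam0 : (0:ℝ) < lam := lt_trans two_pos hlam
  have hΛ0 : (0:ℝ) < Λ := hε.trans hεΛ
  set f : ℝ → ℝ := fun y => y * u₀ y / (y + (u₀ y) ^ 2) with hfdef
  -- positivity of f on Icc
  have hfpos : ∀ y ∈ Icc ε Λ, 0 < f y := by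
    intro y hy
    have hy0 : 0 < y := lt_of_lt_of_le hε hy.1
    have hw : 0 < wfun lam ε Λ y := by
      unfold wfun
      have : (0:ℝ) < ε / (Λ * y) := by positivity
      positivity
    have hu : 0 < u₀ y := lt_of_lt_of_le hw (hbound y hy).1
    have hden : 0 < y + (u₀ y) ^ 2 := by positivity
    exact div_pos (mul_pos hy0 hu) hden
  have hdenne : ∀ y ∈ Icc ε Λ, y + (u₀ y) ^ 2 ≠ 0 := by
    intro y hy
    have hy0 : 0 < y := lt_of_lt_of_le hε hy.1
    positivity
  have hfcont : ContinuousOn f (Icc ε Λ) := by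
    apply ContinuousOn.div
    · exact continuous_id.continuousOn.mul hcont
    · exact continuous_id.continuousOn.add (hcont.pow 2)
    · exact hdenne
  -- clamp
  set c : ℝ → ℝ := fun y => min Λ (max ε y) with hcdef
  have hcc : Continuous c := continuous_const.min (continuous_const.max continuous_id)
  have hcmem : ∀ y, c y ∈ Icc ε Λ := fun y =>
    ⟨le_min hεΛ.le (le_max_left _ _), min_le_left _ _⟩
  have hceq : ∀ y ∈ Icc ε Λ, c y = y := fun y hy => by
    simp only [hcdef, max_eq_right hy.1, min_eq_right hy.2]
  set g : ℝ → ℝ := fun y => f (c y) with hgdef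
  have hgc : Continuous g := hfcont.comp_continuous hcc hcmem
  have hgeqf : ∀ y ∈ Icc ε Λ, g y = f y := fun y hy => by rw [hgdef]; simp [hceq y hy]
  set h : ℝ → ℝ := fun y => g y / c y with hhdef
  have hcne : ∀ y, c y ≠ 0 := fun y => (lt_of_lt_of_le hε (hcmem y).1).ne'
  have hhc : Continuous h := hgc.div hcc hcne
  set F : ℝ → ℝ := fun x => ∫ y in ε..x, g y with hFdef
  set H : ℝ → ℝ := fun x => ∫ y in x..Λ, h y with hHdef
  have hFeq : ∀ x ∈ Icc ε Λ, F x = ∫ y in ε..x, f y := by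
    intro x hx
    apply intervalIntegral.integral_congr
    intro y hy
    rw [uIcc_of_le hx.1] at hy
    exact hgeqf y ⟨hy.1, hy.2.trans hx.2⟩
  have hFd : ∀ x : ℝ, HasDerivAt F (g x) x := by
    intro x
    exact intervalIntegral.integral_hasDerivAt_right (hgc.intervalIntegrable ε x)
      (hgc.stronglyMeasurableAtFilter _ _) hgc.continuousAt
  have hHd : ∀ x : ℝ, HasDerivAt H (-(h x)) x := by
    intro x
    exact intervalIntegral.integral_hasDerivAt_left (hhc.intervalIntegrable x Λ)
      (hhc.stronglyMeasurableAtFilter _ _) hhc.continuousAt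
  set G : ℝ → ℝ := fun x => (lam / 4) * (x⁻¹ * F x + H x) with hGdef
  have hGd : ∀ x ∈ Icc ε Λ, HasDerivAt G (-(lam / (4 * x ^ 2)) * F x) x := by
    intro x hx
    have hx0 : 0 < x := lt_of_lt_of_le hε hx.1
    have h1 : HasDerivAt (fun x : ℝ => x⁻¹) (-(x ^ 2)⁻¹) x := hasDerivAt_inv hx0.ne'
    have h2 := ((h1.mul (hFd x)).add (hHd x)).const_mul (lam / 4)
    refine h2.congr_deriv ?_
    have hhx : h x = g x / x := by rw [hhdef]; simp [hceq x hx]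
    rw [hhx]
    field_simp
    ring
  have hEq : ∀ x ∈ Icc ε Λ, u₀ x = G x := by
    intro x hx
    have hx0 : 0 < x := lt_of_lt_of_le hε hx.1
    set k : ℝ → ℝ := fun y => (1 / (y + x + |y - x|)) * f y with hkdef
    have hkcont : ContinuousOn k (Icc ε Λ) := by
      apply ContinuousOn.mul _ hfcont
      apply ContinuousOn.div continuousOn_const
      · exact ((continuous_id.add continuous_const).add
          ((continuous_id.sub continuous_const).abs)).continuousOn
      · intro y hy
        have hy0 : 0 < y := lt_of_lt_of_le hε hy.1
        have := abs_nonneg (y - x)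
        positivity
    have hi1 : IntervalIntegrable k volume ε x :=
      (hkcont.mono (by rw [uIcc_of_le hx.1]; exact Icc_subset_Icc le_rfl hx.2)).intervalIntegrable
    have hi2 : IntervalIntegrable k volume x Λ :=
      (hkcont.mono (by rw [uIcc_of_le hx.2]; exact Icc_subset_Icc hx.1 le_rfl)).intervalIntegrable
    have hsplit : (∫ y in ε..Λ, k y) = (∫ y in ε..x, k y) + ∫ y in x..Λ, k y :=
      (intervalIntegral.integral_add_adjacent_intervals hi1 hi2).symm
    have h3 : (∫ y in ε..x, k y) = (2 * x)⁻¹ * F x := by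
      rw [hFeq x hx, ← intervalIntegral.integral_const_mul]
      apply intervalIntegral.integral_congr
      intro y hy
      rw [uIcc_of_le hx.1] at hy
      have habs : |y - x| = x - y := by rw [abs_of_nonpos (by linarith [hy.2])]; ring
      rw [hkdef]
      simp only
      rw [habs]
      have : y + x + (x - y) = 2 * x := by ring
      rw [this]
      rw [one_div]
    have h4 : (∫ y in x..Λ, k y) = 2⁻¹ * H x := by
      rw [hHdef]
      simp only
      rw [← intervalIntegral.integral_const_mul]
      apply intervalIntegral.integral_congr
      intro y hy
      rw [uIcc_of_le hx.2] at hy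
      have hymem : y ∈ Icc ε Λ := ⟨hx.1.trans hy.1, hy.2⟩
      have hy0 : 0 < y := lt_of_lt_of_le hε hymem.1
      have habs : |y - x| = y - x := abs_of_nonneg (by linarith [hy.1])
      rw [hkdef, hhdef]
      simp only
      rw [habs, hgeqf y hymem, hceq y hymem]
      have : y + x + (y - x) = 2 * y := by ring
      rw [this]
      field_simp
    have := hfix x hx
    rw [opA] at this
    rw [this, hGdef]
    simp only
    have : (∫ y in ε..Λ, (1 / (y + x + |y - x|)) * (y * u₀ y / (y + (u₀ y) ^ 2)))
        = (∫ y in ε..Λ, k y) := rfl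
    rw [this, hsplit, h3, h4]
    field_simp
    ring
  refine ⟨fun x => -(lam / (4 * x ^ 2)) * ∫ y in ε..x, f y, ?_, fun x hx => rfl, ?_, ?_⟩
  · intro x hx
    have := ((hGd x hx).hasDerivWithinAt).congr (fun y hy => hEq y hy) (hEq x hx)
    rwa [hFeq x hx] at this
  · simp
  · intro x hx
    have hx0 : 0 < x := hε.trans hx.1
    have hfint : IntervalIntegrable f volume ε x :=
      (hfcont.mono (by rw [uIcc_of_le hx.1.le]; exact Icc_subset_Icc le_rfl hx.2)).intervalIntegrable
    have hpos : 0 < ∫ y in ε..x, f y := by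
      apply intervalIntegral.intervalIntegral_pos_of_pos_on hfint _ hx.1
      intro y hy
      exact hfpos y ⟨hy.1.le, hy.2.le.trans hx.2⟩
    have hneg : -(lam / (4 * x ^ 2)) < 0 := by
      have : 0 < lam / (4 * x ^ 2) := by positivity
      linarith
    exact mul_neg_of_neg_of_pos hneg hpos
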